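/- Let T, p be positive integers, φ_1, ..., φ_T ∈ ℝ^p, δ ∈ (0, 1), S ≥ 0. Set Z_0 = I_p, and let Δ̂_t, Δ_t be real numbers satisfying Δ̂_t ≥ 0 and 0 ≤ Δ̂_t − Δ_t ≤ B_t, where γ_t = √(log det Z_t + 2 log(1/δ)) + S, B_t = 2 γ_{t-1} ‖φ_t‖_{Z_{t-1}⁻¹}, I_t = 1{Δ̂_t ≤ B_t}, and Z_t = Z_{t-1} + I_t φ_t φ_tᵀ for t = 1, ..., T. Then for every ε ∈ (0, 1/2), the number of queried labels satisfies Σ_{t=1}^T I_t ≤ #{t ∈ [T] : Δ_t² ≤ ε²} + (8/ε²) · (log det Z_T + 2 log(1/δ) + S² + 1/32) · log det Z_T. -/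

import Mathlib

open Matrix Finset

private lemma vmv_smul_eq {p : ℕ} (c : ℝ) (v : Fin p → ℝ) :
    c • vecMulVec v v = replicateCol Unit (c • v) * replicateRow Unit v := by
  rw [← vecMulVec_eq]
  ext i j
  simp [vecMulVec_apply, mul_assoc]

private lemma vmv_posSemidef {p : ℕ} (c : ℝ) (hc : 0 ≤ c) (v : Fin p → ℝ) :
    (c • vecMulVec v v : Matrix (Fin p) (Fin p) ℝ).PosSemidef := by
  apply PosSemidef.of_dotProduct_mulVec_nonneg
  · ext i j
    simp [Matrix.IsHermitian, conjTranspose_apply, vecMulVec_apply, mul_comm]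
  · intro x
    have h : star x ⬝ᵥ (c • vecMulVec v v : Matrix (Fin p) (Fin p) ℝ) *ᵥ x
        = c * (v ⬝ᵥ x) ^ 2 := by
      simp only [star_trivial, smul_mulVec, dotProduct_smul, smul_eq_mul]
      congr 1
      have : (vecMulVec v v : Matrix (Fin p) (Fin p) ℝ) *ᵥ x = (v ⬝ᵥ x) • v := by
        ext i
        simp only [mulVec, dotProduct, vecMulVec_apply, Pi.smul_apply, smul_eq_mul]
        rw [Finset.sum_mul]
        exact Finset.sum_congr rfl fun j _ => by ring
      rw [this]
      simp [dotProduct_smul, dotProduct_comm x v, sq, smul_eq_mul, mul_comm]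
    rw [h]
    positivity

private lemma det_rank_one_update {p : ℕ} {A : Matrix (Fin p) (Fin p) ℝ}
    (hA : A.PosDef) (c : ℝ) (v : Fin p → ℝ) :
    (A + c • vecMulVec v v).det = A.det * (1 + c * (v ⬝ᵥ A⁻¹ *ᵥ v)) := by
  rw [vmv_smul_eq, det_add_replicateCol_mul_replicateRow hA.det_pos.ne'.isUnit]
  congr 1
  rw [det_unique]
  simp only [Matrix.add_apply, Matrix.one_apply_eq, Matrix.mul_apply, replicateRow_apply, replicateCol_apply,
    dotProduct, mulVec, Pi.smul_apply, smul_eq_mul]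
  congr 1
  simp only [Finset.sum_mul, Finset.mul_sum]
  rw [Finset.sum_comm]
  exact Finset.sum_congr rfl fun i _ => Finset.sum_congr rfl fun j _ => by ring

private lemma div_add_le_log {x : ℝ} (hx : 0 ≤ x) : x / (1 + x) ≤ Real.log (1 + x) := by
  have h1 : (0:ℝ) < 1 + x := by linarith
  have h2 := Real.log_le_sub_one_of_pos (inv_pos.2 h1)
  rw [Real.log_inv] at h2
  have h3 : x / (1 + x) = 1 - (1 + x)⁻¹ := by
    field_simp
    ring
  linarith

set_option maxHeartbeats 2000000 in
/-- Label-complexity bound for the frozen-NTK selective sampler. Rounds are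
indexed `0, ..., T-1`; `Z t` is the covariance matrix before round `t`
(`Z 0 = I`), and the quantities `γ, B, I, Z` are defined by the mutual
recursion of the algorithm. -/
theorem stmt_10 (T p : ℕ) (hT : 0 < T) (hp : 0 < p)
    (φ : ℕ → Fin p → ℝ) (δ S : ℝ) (hδ : δ ∈ Set.Ioo (0 : ℝ) 1) (hS : 0 ≤ S)
    (Z : ℕ → Matrix (Fin p) (Fin p) ℝ) (hZ0 : Z 0 = 1)
    (γ B I : ℕ → ℝ) (Δhat Δ : ℕ → ℝ)
    (hγ : ∀ t < T, γ t = Real.sqrt (Real.log (Z t).det + 2 * Real.log (1 / δ)) + S)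
    (hB : ∀ t < T, B t = 2 * γ t * Real.sqrt (φ t ⬝ᵥ (Z t)⁻¹ *ᵥ φ t))
    (hI : ∀ t < T, I t = if Δhat t ≤ B t then (1 : ℝ) else 0)
    (hZ : ∀ t < T, Z (t + 1) = Z t + I t • vecMulVec (φ t) (φ t))
    (hΔhat : ∀ t < T, 0 ≤ Δhat t)
    (hΔl : ∀ t < T, 0 ≤ Δhat t - Δ t)
    (hΔu : ∀ t < T, Δhat t - Δ t ≤ B t)
    (ε : ℝ) (hε : 0 < ε) (hε' : ε < 1 / 2) :
    ∑ t ∈ Finset.range T, I t ≤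
      ((Finset.range T).filter (fun t => (Δ t) ^ 2 ≤ ε ^ 2)).card
        + (8 / ε ^ 2) * (Real.log (Z T).det + 2 * Real.log (1 / δ) + S ^ 2 + 1 / 32)
            * Real.log (Z T).det := by
  obtain ⟨hδ0, hδ1⟩ := hδ
  obtain ⟨x, hxdef⟩ : ∃ x : ℕ → ℝ, ∀ t, x t = φ t ⬝ᵥ (Z t)⁻¹ *ᵥ φ t :=
    ⟨_, fun _ => rfl⟩
  -- basic facts about I
  have hI01 : ∀ t < T, I t = 0 ∨ I t = 1 := by
    intro t ht; rw [hI t ht]; split <;> simp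
  have hInn : ∀ t < T, 0 ≤ I t := by
    intro t ht; rcases hI01 t ht with h | h <;> simp [h]
  -- positive definiteness
  have hPD : ∀ t, t ≤ T → (Z t).PosDef := by
    intro t
    induction t with
    | zero => intro _; rw [hZ0]; exact Matrix.PosDef.one
    | succ n ih =>
      intro hn
      rw [hZ n (by omega)]
      exact (ih (by omega)).add_posSemidef (vmv_posSemidef _ (hInn n (by omega)) _)
  -- x is nonnegative
  have hxnn : ∀ t < T, 0 ≤ x t := by
    intro t ht
    have := ((hPD t (by omega)).inv.posSemidef.dotProduct_mulVec_nonneg (φ t))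
    rw [hxdef t]
    simpa using this
  -- determinant recursion
  have hdet : ∀ t < T, (Z (t + 1)).det = (Z t).det * (1 + I t * x t) := by
    intro t ht
    rw [hZ t ht, hxdef t]
    exact det_rank_one_update (hPD t (by omega)) _ _
  -- determinants are ≥ 1 and monotone
  have hdet1 : ∀ t, t ≤ T → 1 ≤ (Z t).det := by
    intro t
    induction t with
    | zero => intro _; simp [hZ0]
    | succ n ih =>
      intro hn
      rw [hdet n (by omega)]
      have h1 := ih (by omega)
      have h2 : 0 ≤ I n * x n := mul_nonneg (hInn n (by omega)) (hxnn n (by omega))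
      nlinarith
  have hdetmono : ∀ t, t ≤ T → (Z t).det ≤ (Z T).det := by
    intro t ht
    have key : ∀ k, t + k ≤ T → (Z t).det ≤ (Z (t + k)).det := by
      intro k
      induction k with
      | zero => intro _; simp
      | succ m ih =>
        intro hm
        have h1 := ih (by omega)
        rw [show t + (m+1) = (t+m) + 1 from rfl, hdet (t+m) (by omega)]
        have h2 : 0 ≤ I (t+m) * x (t+m) := mul_nonneg (hInn _ (by omega)) (hxnn _ (by omega))
        have h3 := hdet1 (t+m) (by omega)
        nlinarith
    have := key (T - t) (by omega)
    rwa [show t + (T - t) = T by omega] at this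
  -- log det telescoping
  have hlog : ∀ n, n ≤ T → Real.log (Z n).det = ∑ t ∈ Finset.range n, Real.log (1 + I t * x t) := by
    intro n
    induction n with
    | zero => intro _; simp [hZ0]
    | succ m ih =>
      intro hm
      rw [Finset.sum_range_succ, ← ih (by omega), hdet m (by omega), Real.log_mul]
      · have := hdet1 m (by omega); linarith
      · have h2 : 0 ≤ I m * x m := mul_nonneg (hInn m (by omega)) (hxnn m (by omega))
        linarith
  -- key abbreviations
  obtain ⟨L, hLdef⟩ : ∃ L : ℝ, L = Real.log (Z T).det + 2 * Real.log (1 / δ) := ⟨_, rfl⟩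
  have hlogδ : 0 < Real.log (1 / δ) := by
    apply Real.log_pos
    rw [lt_div_iff₀ hδ0]; linarith
  have hlogZT : 0 ≤ Real.log (Z T).det := Real.log_nonneg (hdet1 T le_rfl)
  have hL : 0 < L := by rw [hLdef]; linarith
  obtain ⟨K, hKdef⟩ : ∃ K : ℝ, K = L + S ^ 2 + 1 / 32 := ⟨_, rfl⟩
  have hK : 0 < K := by rw [hKdef]; positivity
  -- per-round inequality: I t * (x t / (1 + x t)) ≤ log (1 + I t * x t)
  have hterm : ∀ t < T, I t * (x t / (1 + x t)) ≤ Real.log (1 + I t * x t) := by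
    intro t ht
    rcases hI01 t ht with h | h
    · simp [h]
    · rw [h, one_mul, one_mul]
      exact div_add_le_log (hxnn t ht)
  have htermnn : ∀ t < T, 0 ≤ I t * (x t / (1 + x t)) := by
    intro t ht
    have := hxnn t ht
    have h1 : (0:ℝ) < 1 + x t := by linarith
    exact mul_nonneg (hInn t ht) (div_nonneg this h1.le)
  -- for "hard" queried rounds: 1 ≤ (8 K / ε^2) * (x t / (1 + x t))
  have hhard : ∀ t < T, ¬ (Δ t) ^ 2 ≤ ε ^ 2 → I t ≤ (8 * K / ε ^ 2) * (I t * (x t / (1 + x t))) := by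
    intro t ht hΔt
    rcases hI01 t ht with h | h
    · simp [h]
    · rw [h, one_mul]
      push_neg at hΔt
      -- B t ≥ ε
      have hq : Δhat t ≤ B t := by
        by_contra hq
        rw [hI t ht, if_neg hq] at h; norm_num at h
      have hεB : ε ≤ B t := by
        have h0 := hΔhat t ht
        have h1 := hΔl t ht
        have h2 := hΔu t ht
        rcases le_or_gt 0 (Δ t) with hs | hs
        · nlinarith
        · nlinarith
      -- γ t bounds
      have hγpos : 0 < γ t := by
        rw [hγ t ht]
        have : 0 < Real.log (Z t).det + 2 * Real.log (1 / δ) := by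
          have := Real.log_nonneg (hdet1 t (by omega))
          linarith
        have := Real.sqrt_pos.2 this
        linarith
      have hγle : γ t ^ 2 ≤ 2 * L + 2 * S ^ 2 := by
        rw [hγ t ht]
        have hm : Real.log (Z t).det ≤ Real.log (Z T).det := by
          apply Real.log_le_log
          · have := hdet1 t (by omega); linarith
          · exact hdetmono t (by omega)
        have hinn : 0 ≤ Real.log (Z t).det + 2 * Real.log (1 / δ) := by
          have := Real.log_nonneg (hdet1 t (by omega)); linarith
        have hsq : Real.sqrt (Real.log (Z t).det + 2 * Real.log (1 / δ)) ^ 2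
            = Real.log (Z t).det + 2 * Real.log (1 / δ) := Real.sq_sqrt hinn
        have hsnn : 0 ≤ Real.sqrt (Real.log (Z t).det + 2 * Real.log (1 / δ)) :=
          Real.sqrt_nonneg _
        have hLle : Real.log (Z t).det + 2 * Real.log (1 / δ) ≤ L := by
          rw [hLdef]; linarith
        nlinarith [sq_nonneg (Real.sqrt (Real.log (Z t).det + 2 * Real.log (1 / δ)) - S)]
      -- ε² ≤ 4 γ t ² x t
      have hε2 : ε ^ 2 ≤ 4 * γ t ^ 2 * x t := by
        have hxt := hxnn t ht
        have hsq : Real.sqrt (x t) ^ 2 = x t := Real.sq_sqrt hxt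
        have hBt : B t = 2 * γ t * Real.sqrt (x t) := by rw [hB t ht, hxdef t]
        have hsnn : 0 ≤ Real.sqrt (x t) := Real.sqrt_nonneg _
        have h5 : ε * ε ≤ (2 * γ t * Real.sqrt (x t)) * (2 * γ t * Real.sqrt (x t)) :=
          mul_self_le_mul_self hε.le (hBt ▸ hεB)
        nlinarith [h5, hsq, sq_nonneg (γ t)]
      have hεx : ε ^ 2 ≤ (8 * L + 8 * S ^ 2) * x t := by
        have hxt := hxnn t ht
        nlinarith
      -- conclude
      have hxt := hxnn t ht
      have h1x : (0:ℝ) < 1 + x t := by linarith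
      have hεq : ε ^ 2 ≤ 1 / 4 := by nlinarith
      have h2 : ε ^ 2 * x t ≤ (1/4) * x t := by nlinarith
      have hkey : ε ^ 2 * (1 + x t) ≤ 8 * K * x t := by
        have h3 : ε ^ 2 * (1 + x t) ≤ (8 * L + 8 * S ^ 2 + 1 / 4) * x t := by
          nlinarith [hεx, h2]
        have h4 : (8 * L + 8 * S ^ 2 + 1 / 4) * x t = 8 * K * x t := by rw [hKdef]; ring
        linarith [h3, h4.le]
      have heq : (8 * K / ε ^ 2) * (x t / (1 + x t)) = (8 * K * x t) / (ε ^ 2 * (1 + x t)) := by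
        field_simp
      rw [heq, le_div_iff₀ (by positivity : (0:ℝ) < ε ^ 2 * (1 + x t)), one_mul]
      exact hkey
  -- split the sum
  classical
  have hsplit := Finset.sum_filter_add_sum_filter_not (Finset.range T)
    (fun t => (Δ t) ^ 2 ≤ ε ^ 2) I
  -- easy part
  have heasy : ∑ t ∈ (Finset.range T).filter (fun t => (Δ t) ^ 2 ≤ ε ^ 2), I t
      ≤ ((Finset.range T).filter (fun t => (Δ t) ^ 2 ≤ ε ^ 2)).card := by
    calc ∑ t ∈ (Finset.range T).filter (fun t => (Δ t) ^ 2 ≤ ε ^ 2), I t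
        ≤ ∑ _t ∈ (Finset.range T).filter (fun t => (Δ t) ^ 2 ≤ ε ^ 2), (1:ℝ) := by
          apply Finset.sum_le_sum
          intro t htmem
          have ht : t < T := Finset.mem_range.1 (Finset.mem_filter.1 htmem).1
          rcases hI01 t ht with h | h <;> simp [h]
      _ = ((Finset.range T).filter (fun t => (Δ t) ^ 2 ≤ ε ^ 2)).card := by simp
  -- hard part
  have hhardsum : ∑ t ∈ (Finset.range T).filter (fun t => ¬ (Δ t) ^ 2 ≤ ε ^ 2), I t
      ≤ (8 * K / ε ^ 2) * ∑ t ∈ Finset.range T, I t * (x t / (1 + x t)) := by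
    rw [Finset.mul_sum]
    calc ∑ t ∈ (Finset.range T).filter (fun t => ¬ (Δ t) ^ 2 ≤ ε ^ 2), I t
        ≤ ∑ t ∈ (Finset.range T).filter (fun t => ¬ (Δ t) ^ 2 ≤ ε ^ 2),
            (8 * K / ε ^ 2) * (I t * (x t / (1 + x t))) := by
          apply Finset.sum_le_sum
          intro t htmem
          obtain ⟨ht1, ht2⟩ := Finset.mem_filter.1 htmem
          exact hhard t (Finset.mem_range.1 ht1) ht2
      _ ≤ ∑ t ∈ Finset.range T, (8 * K / ε ^ 2) * (I t * (x t / (1 + x t))) := by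
          apply Finset.sum_le_sum_of_subset_of_nonneg (Finset.filter_subset _ _)
          intro t ht1 _
          have ht := Finset.mem_range.1 ht1
          exact mul_nonneg (by positivity) (htermnn t ht)
  -- bound the weighted sum by log det
  have hlogsum : ∑ t ∈ Finset.range T, I t * (x t / (1 + x t)) ≤ Real.log (Z T).det := by
    rw [hlog T le_rfl]
    apply Finset.sum_le_sum
    intro t ht1
    exact hterm t (Finset.mem_range.1 ht1)
  -- combine
  have hfinal : (8 * K / ε ^ 2) * ∑ t ∈ Finset.range T, I t * (x t / (1 + x t))
      ≤ (8 / ε ^ 2) * K * Real.log (Z T).det := by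
    have h1 : (8 * K / ε ^ 2) * ∑ t ∈ Finset.range T, I t * (x t / (1 + x t))
        ≤ (8 * K / ε ^ 2) * Real.log (Z T).det :=
      mul_le_mul_of_nonneg_left hlogsum (by positivity)
    calc (8 * K / ε ^ 2) * ∑ t ∈ Finset.range T, I t * (x t / (1 + x t))
        ≤ (8 * K / ε ^ 2) * Real.log (Z T).det := h1
      _ = (8 / ε ^ 2) * K * Real.log (Z T).det := by ring
  have hKeq : Real.log (Z T).det + 2 * Real.log (1 / δ) + S ^ 2 + 1 / 32 = K := by
    rw [hKdef, hLdef]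
  rw [hKeq]
  linarith [hsplit, heasy, hhardsum, hfinal]
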